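/- The explicit pair (η₁(∞), η₂(∞)) is an equilibrium of the two-level model: 𝒦₁(η₁(∞), η₂(∞)) = 0 and 𝒦₂(η₁(∞), η₂(∞)) = 0, where η₁(∞) = p(z₁⁺P₊ + z₁⁻P₋) and η₂(∞) = (1−p)(z₂⁺P₊ + z₂⁻P₋); moreover η₁(∞), η₂(∞) are positive semidefinite with Tr(η₁(∞)) + Tr(η₂(∞)) = 1. -/
import Mathlib


open Matrix
open scoped ComplexOrder

noncomputable section TwoLevel

def σm : Matrix (Fin 2) (Fin 2) ℂ := !![0, 0; 1, 0]
def σp : Matrix (Fin 2) (Fin 2) ℂ := !![0, 1; 0, 0]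
def σz : Matrix (Fin 2) (Fin 2) ℂ := !![1, 0; 0, -1]
def Pp : Matrix (Fin 2) (Fin 2) ℂ := !![1, 0; 0, 0]
def Pm : Matrix (Fin 2) (Fin 2) ℂ := !![0, 0; 0, 1]

/-- `𝒦₁` of the two-level model. -/
def K1 (γ₀ γ₁ γ₂ κ ω₁ : ℝ) (η₁ η₂ : Matrix (Fin 2) (Fin 2) ℂ) :
    Matrix (Fin 2) (Fin 2) ℂ :=
  (γ₀ : ℂ) • (σm * η₁ * σp - (1/2 : ℂ) • (Pp * η₁ + η₁ * Pp))
    + (γ₂ : ℂ) • (σp * η₂ * σm)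
    - ((γ₁ : ℂ)/2) • (Pp * η₁ + η₁ * Pp)
    - ((γ₀ : ℂ) * (κ : ℂ)) • η₁
    - (Complex.I * (ω₁ : ℂ) / 2) • (σz * η₁ - η₁ * σz)

/-- `𝒦₂` of the two-level model. -/
def K2 (γ₀ γ₁ γ₂ κ ω₂ : ℝ) (η₁ η₂ : Matrix (Fin 2) (Fin 2) ℂ) :
    Matrix (Fin 2) (Fin 2) ℂ :=
  (γ₀ : ℂ) • (σm * η₂ * σp - (1/2 : ℂ) • (Pp * η₂ + η₂ * Pp))
    + (γ₁ : ℂ) • (σm * η₁ * σp)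
    - ((γ₂ : ℂ)/2) • (Pm * η₂ + η₂ * Pm)
    + ((γ₀ : ℂ) * (κ : ℂ)) • η₁
    - (Complex.I * (ω₂ : ℂ) / 2) • (σz * η₂ - η₂ * σz)

/-- `κ₂ = γ₂κ/(γ₁+γ₀(1+κ))`. -/
def κ₂ (γ₀ γ₁ γ₂ κ : ℝ) : ℝ := γ₂ * κ / (γ₁ + γ₀ * (1 + κ))

/-- `z₁⁺ = κ₁/(1+κ₁)` with `κ₁ = κ`. -/
def z1p (κ : ℝ) : ℝ := κ / (1 + κ)

/-- `z₂⁺ = κ₂/(1+κ₂)`. -/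
def z2p (γ₀ γ₁ γ₂ κ : ℝ) : ℝ := κ₂ γ₀ γ₁ γ₂ κ / (1 + κ₂ γ₀ γ₁ γ₂ κ)

/-- `p = γ₂(1+κ)/(γ₂ + κ(γ₀+γ₁+γ₂) + κ²(γ₀+γ₂))`. -/
def peq (γ₀ γ₁ γ₂ κ : ℝ) : ℝ :=
  γ₂ * (1 + κ) / (γ₂ + κ * (γ₀ + γ₁ + γ₂) + κ ^ 2 * (γ₀ + γ₂))

/-- `η₁(∞) = p(z₁⁺P₊ + z₁⁻P₋)`. -/
def η1eq (γ₀ γ₁ γ₂ κ : ℝ) : Matrix (Fin 2) (Fin 2) ℂ :=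
  (peq γ₀ γ₁ γ₂ κ : ℂ) • ((z1p κ : ℂ) • Pp + ((1 - z1p κ : ℝ) : ℂ) • Pm)

/-- `η₂(∞) = (1−p)(z₂⁺P₊ + z₂⁻P₋)`. -/
def η2eq (γ₀ γ₁ γ₂ κ : ℝ) : Matrix (Fin 2) (Fin 2) ℂ :=
  ((1 - peq γ₀ γ₁ γ₂ κ : ℝ) : ℂ) •
    ((z2p γ₀ γ₁ γ₂ κ : ℂ) • Pp + ((1 - z2p γ₀ γ₁ γ₂ κ : ℝ) : ℂ) • Pm)

end TwoLevel


section Aux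

variable {γ₀ γ₁ γ₂ κ : ℝ}

lemma denom3_pos (hγ₀ : 0 < γ₀) (hγ₁ : 0 < γ₁) (hκ : 0 < κ) :
    0 < γ₁ + γ₀ * (1 + κ) := by positivity

lemma κ₂_nonneg (hγ₀ : 0 < γ₀) (hγ₁ : 0 < γ₁) (hγ₂ : 0 < γ₂) (hκ : 0 < κ) :
    0 ≤ κ₂ γ₀ γ₁ γ₂ κ := by
  unfold κ₂; positivity

lemma denom4_pos (hγ₀ : 0 < γ₀) (hγ₁ : 0 < γ₁) (hγ₂ : 0 < γ₂) (hκ : 0 < κ) :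
    0 < 1 + κ₂ γ₀ γ₁ γ₂ κ := by
  have := κ₂_nonneg hγ₀ hγ₁ hγ₂ hκ; linarith

lemma denom2_pos (hγ₀ : 0 < γ₀) (hγ₁ : 0 < γ₁) (hγ₂ : 0 < γ₂) (hκ : 0 < κ) :
    0 < γ₂ + κ * (γ₀ + γ₁ + γ₂) + κ ^ 2 * (γ₀ + γ₂) := by positivity

lemma peq_nonneg (hγ₀ : 0 < γ₀) (hγ₁ : 0 < γ₁) (hγ₂ : 0 < γ₂) (hκ : 0 < κ) :
    0 ≤ peq γ₀ γ₁ γ₂ κ := by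
  unfold peq; positivity

lemma peq_le_one (hγ₀ : 0 < γ₀) (hγ₁ : 0 < γ₁) (hγ₂ : 0 < γ₂) (hκ : 0 < κ) :
    peq γ₀ γ₁ γ₂ κ ≤ 1 := by
  unfold peq
  rw [div_le_one (denom2_pos hγ₀ hγ₁ hγ₂ hκ)]
  nlinarith [sq_nonneg κ]

lemma z1p_nonneg (hκ : 0 < κ) : 0 ≤ z1p κ := by
  unfold z1p; positivity

lemma z1p_le_one (hκ : 0 < κ) : z1p κ ≤ 1 := by
  unfold z1p
  rw [div_le_one (by linarith)]; linarith

lemma z2p_nonneg (hγ₀ : 0 < γ₀) (hγ₁ : 0 < γ₁) (hγ₂ : 0 < γ₂) (hκ : 0 < κ) :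
    0 ≤ z2p γ₀ γ₁ γ₂ κ := by
  unfold z2p
  exact div_nonneg (κ₂_nonneg hγ₀ hγ₁ hγ₂ hκ) (denom4_pos hγ₀ hγ₁ hγ₂ hκ).le

lemma z2p_le_one (hγ₀ : 0 < γ₀) (hγ₁ : 0 < γ₁) (hγ₂ : 0 < γ₂) (hκ : 0 < κ) :
    z2p γ₀ γ₁ γ₂ κ ≤ 1 := by
  unfold z2p
  rw [div_le_one (denom4_pos hγ₀ hγ₁ hγ₂ hκ)]; linarith

-- the four scalar equilibrium equations, with
-- a = p z₁⁺, b = p (1 - z₁⁺), c = (1-p) z₂⁺, d = (1-p)(1 - z₂⁺)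
lemma eqE1 (hγ₀ : 0 < γ₀) (hγ₁ : 0 < γ₁) (hγ₂ : 0 < γ₂) (hκ : 0 < κ) :
    -γ₀ * (peq γ₀ γ₁ γ₂ κ * z1p κ)
      + γ₂ * ((1 - peq γ₀ γ₁ γ₂ κ) * (1 - z2p γ₀ γ₁ γ₂ κ))
      - γ₁ * (peq γ₀ γ₁ γ₂ κ * z1p κ)
      - γ₀ * κ * (peq γ₀ γ₁ γ₂ κ * z1p κ) = 0 := by
  have h1 : (1 + κ) ≠ 0 := by linarith
  have h2 := (denom2_pos hγ₀ hγ₁ hγ₂ hκ).ne'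
  have h3 := (denom3_pos hγ₀ hγ₁ hκ).ne'
  have h4 := (denom4_pos hγ₀ hγ₁ hγ₂ hκ).ne'
  unfold peq z1p z2p κ₂ at *
  field_simp at *
  ring

lemma eqE2 (hγ₀ : 0 < γ₀) (hγ₁ : 0 < γ₁) (hγ₂ : 0 < γ₂) (hκ : 0 < κ) :
    γ₀ * (peq γ₀ γ₁ γ₂ κ * z1p κ)
      - γ₀ * κ * (peq γ₀ γ₁ γ₂ κ * (1 - z1p κ)) = 0 := by
  have h1 : (1 + κ) ≠ 0 := by linarith
  have h2 := (denom2_pos hγ₀ hγ₁ hγ₂ hκ).ne'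
  unfold peq z1p at *
  field_simp at *
  ring

lemma eqE3 (hγ₀ : 0 < γ₀) (hγ₁ : 0 < γ₁) (hγ₂ : 0 < γ₂) (hκ : 0 < κ) :
    -γ₀ * ((1 - peq γ₀ γ₁ γ₂ κ) * z2p γ₀ γ₁ γ₂ κ)
      + γ₀ * κ * (peq γ₀ γ₁ γ₂ κ * z1p κ) = 0 := by
  have h1 : (1 + κ) ≠ 0 := by linarith
  have h2 := (denom2_pos hγ₀ hγ₁ hγ₂ hκ).ne'
  have h3 := (denom3_pos hγ₀ hγ₁ hκ).ne'
  have h4 := (denom4_pos hγ₀ hγ₁ hγ₂ hκ).ne'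
  unfold peq z1p z2p κ₂ at *
  field_simp at *
  ring

lemma eqE4 (hγ₀ : 0 < γ₀) (hγ₁ : 0 < γ₁) (hγ₂ : 0 < γ₂) (hκ : 0 < κ) :
    γ₀ * ((1 - peq γ₀ γ₁ γ₂ κ) * z2p γ₀ γ₁ γ₂ κ)
      + γ₁ * (peq γ₀ γ₁ γ₂ κ * z1p κ)
      - γ₂ * ((1 - peq γ₀ γ₁ γ₂ κ) * (1 - z2p γ₀ γ₁ γ₂ κ))
      + γ₀ * κ * (peq γ₀ γ₁ γ₂ κ * (1 - z1p κ)) = 0 := by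
  have h1 : (1 + κ) ≠ 0 := by linarith
  have h2 := (denom2_pos hγ₀ hγ₁ hγ₂ hκ).ne'
  have h3 := (denom3_pos hγ₀ hγ₁ hκ).ne'
  have h4 := (denom4_pos hγ₀ hγ₁ hγ₂ hκ).ne'
  unfold peq z1p z2p κ₂ at *
  field_simp at *
  ring

end Aux

/-- The explicit pair `(η₁(∞), η₂(∞))` is an equilibrium of the two-level model:
`𝒦₁(η₁(∞),η₂(∞)) = 0` and `𝒦₂(η₁(∞),η₂(∞)) = 0`; moreover `η₁(∞), η₂(∞)` are positive
semidefinite with `Tr(η₁(∞)) + Tr(η₂(∞)) = 1`. -/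
theorem two_level_equilibrium (γ₀ γ₁ γ₂ κ ω₁ ω₂ : ℝ)
    (hγ₀ : 0 < γ₀) (hγ₁ : 0 < γ₁) (hγ₂ : 0 < γ₂) (hκ : 0 < κ) :
    K1 γ₀ γ₁ γ₂ κ ω₁ (η1eq γ₀ γ₁ γ₂ κ) (η2eq γ₀ γ₁ γ₂ κ) = 0 ∧
    K2 γ₀ γ₁ γ₂ κ ω₂ (η1eq γ₀ γ₁ γ₂ κ) (η2eq γ₀ γ₁ γ₂ κ) = 0 ∧
    (η1eq γ₀ γ₁ γ₂ κ).PosSemidef ∧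
    (η2eq γ₀ γ₁ γ₂ κ).PosSemidef ∧
    (η1eq γ₀ γ₁ γ₂ κ).trace + (η2eq γ₀ γ₁ γ₂ κ).trace = 1 := by
  have hE1 := congrArg (Complex.ofReal) (eqE1 hγ₀ hγ₁ hγ₂ hκ)
  have hE2 := congrArg (Complex.ofReal) (eqE2 hγ₀ hγ₁ hγ₂ hκ)
  have hE3 := congrArg (Complex.ofReal) (eqE3 hγ₀ hγ₁ hγ₂ hκ)
  have hE4 := congrArg (Complex.ofReal) (eqE4 hγ₀ hγ₁ hγ₂ hκ)
  push_cast at hE1 hE2 hE3 hE4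
  refine ⟨?_, ?_, ?_, ?_, ?_⟩
  · ext i j
    fin_cases i <;> fin_cases j <;>
      simp [K1, η1eq, η2eq, σm, σp, σz, Pp, Pm, Matrix.mul_apply,
        Fin.sum_univ_two, Matrix.smul_apply, Matrix.add_apply, Matrix.sub_apply] <;>
      push_cast <;>
      [ linear_combination hE1 ; linear_combination hE2 ]
  · ext i j
    fin_cases i <;> fin_cases j <;>
      simp [K2, η1eq, η2eq, σm, σp, σz, Pp, Pm, Matrix.mul_apply,
        Fin.sum_univ_two, Matrix.smul_apply, Matrix.add_apply, Matrix.sub_apply] <;>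
      push_cast <;>
      [ linear_combination hE3 ; linear_combination hE4 ]
  · have : η1eq γ₀ γ₁ γ₂ κ =
        Matrix.diagonal ![((peq γ₀ γ₁ γ₂ κ * z1p κ : ℝ) : ℂ),
          ((peq γ₀ γ₁ γ₂ κ * (1 - z1p κ) : ℝ) : ℂ)] := by
      ext i j
      fin_cases i <;> fin_cases j <;>
        simp [η1eq, Pp, Pm, Matrix.diagonal] <;> push_cast <;> ring
    rw [this]
    refine Matrix.posSemidef_diagonal_iff.mpr fun i => ?_
    have hp0 := peq_nonneg hγ₀ hγ₁ hγ₂ hκ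
    have hz0 := z1p_nonneg hκ
    have hz1 := z1p_le_one hκ
    fin_cases i
    · exact Complex.zero_le_real.mpr (by nlinarith)
    · exact Complex.zero_le_real.mpr (by nlinarith)
  · have : η2eq γ₀ γ₁ γ₂ κ =
        Matrix.diagonal ![(((1 - peq γ₀ γ₁ γ₂ κ) * z2p γ₀ γ₁ γ₂ κ : ℝ) : ℂ),
          (((1 - peq γ₀ γ₁ γ₂ κ) * (1 - z2p γ₀ γ₁ γ₂ κ) : ℝ) : ℂ)] := by
      ext i j
      fin_cases i <;> fin_cases j <;>
        simp [η2eq, Pp, Pm, Matrix.diagonal] <;> push_cast <;> ring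
    rw [this]
    refine Matrix.posSemidef_diagonal_iff.mpr fun i => ?_
    have hp1 := peq_le_one hγ₀ hγ₁ hγ₂ hκ
    have hz0 := z2p_nonneg hγ₀ hγ₁ hγ₂ hκ
    have hz1 := z2p_le_one hγ₀ hγ₁ hγ₂ hκ
    fin_cases i
    · exact Complex.zero_le_real.mpr (by nlinarith)
    · exact Complex.zero_le_real.mpr (by nlinarith)
  · simp [η1eq, η2eq, Pp, Pm, Matrix.trace, Matrix.diag, Fin.sum_univ_two]
    push_cast
    ring
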